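/- If f is an FGN contract with Σ_{i∈S} f_i(S) ≤ 1 for all S, and p satisfies the equilibrium condition p_i·c_i'(p_i) = Σ_{S∋i} f_i(S)·P_p(S) for all i, then Σ_i p_i·c_i'(p_i) + Π_i(1−p_i) ≤ 1. -/

import Mathlib

open Finset

/-- Probability that exactly the agents in `S` succeed. -/
noncomputable def Pp {n : ℕ} (p : Fin n → ℝ) (S : Finset (Fin n)) : ℝ :=
  (∏ j ∈ S, p j) * ∏ j ∈ Sᶜ, (1 - p j)

theorem stmt3 (n : ℕ) (c : Fin n → ℝ → ℝ) (f : Fin n → Finset (Fin n) → ℝ)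
    (p : Fin n → ℝ)
    (hFGN : ∀ i S, i ∉ S → f i S = 0)
    (hf01 : ∀ i S, f i S ∈ Set.Icc (0:ℝ) 1)
    (hbudget : ∀ S : Finset (Fin n), ∑ i ∈ S, f i S ≤ 1)
    (hp : ∀ i, p i ∈ Set.Icc (0:ℝ) 1)
    (heq : ∀ i, p i * deriv (c i) (p i)
      = ∑ S ∈ Finset.univ.powerset.filter (fun S => i ∈ S), f i S * Pp p S) :
    (∑ i, p i * deriv (c i) (p i)) + ∏ i, (1 - p i) ≤ 1 := by
  have hPp : ∀ S : Finset (Fin n), 0 ≤ Pp p S := by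
    intro S
    apply mul_nonneg
    · exact Finset.prod_nonneg fun j _ => (hp j).1
    · exact Finset.prod_nonneg fun j _ => by linarith [(hp j).2]
  have hsum1 : ∑ S ∈ (Finset.univ : Finset (Fin n)).powerset, Pp p S = 1 := by
    have h := Finset.prod_add p (fun j => 1 - p j) (Finset.univ : Finset (Fin n))
    calc ∑ S ∈ (Finset.univ : Finset (Fin n)).powerset, Pp p S
        = ∑ S ∈ (Finset.univ : Finset (Fin n)).powerset,
            (∏ j ∈ S, p j) * ∏ j ∈ Finset.univ \ S, (1 - p j) := by
          refine Finset.sum_congr rfl fun S hS => ?_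
          simp [Pp, Finset.compl_eq_univ_sdiff]
      _ = ∏ j : Fin n, (p j + (1 - p j)) := h.symm
      _ = 1 := by simp
  -- rewrite LHS sum
  have hswap : (∑ i, p i * deriv (c i) (p i))
      = ∑ S ∈ (Finset.univ : Finset (Fin n)).powerset, ∑ i ∈ S, f i S * Pp p S := by
    calc (∑ i, p i * deriv (c i) (p i))
        = ∑ i, ∑ S ∈ (Finset.univ : Finset (Fin n)).powerset,
            if i ∈ S then f i S * Pp p S else 0 := by
          refine Finset.sum_congr rfl fun i _ => ?_
          rw [heq i, Finset.sum_filter]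
      _ = ∑ S ∈ (Finset.univ : Finset (Fin n)).powerset,
            ∑ i, if i ∈ S then f i S * Pp p S else 0 := by rw [Finset.sum_comm]
      _ = ∑ S ∈ (Finset.univ : Finset (Fin n)).powerset, ∑ i ∈ S, f i S * Pp p S := by
          refine Finset.sum_congr rfl fun S _ => ?_
          rw [Finset.sum_ite_mem, Finset.univ_inter]
  rw [hswap]
  have hprod : (∏ i, (1 - p i)) = Pp p (∅ : Finset (Fin n)) := by simp [Pp]
  rw [hprod, ← hsum1]
  have hmem : (∅ : Finset (Fin n)) ∈ (Finset.univ : Finset (Fin n)).powerset := by simp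
  have h1 : ∑ S ∈ (Finset.univ : Finset (Fin n)).powerset, ∑ i ∈ S, f i S * Pp p S
      = ∑ S ∈ ((Finset.univ : Finset (Fin n)).powerset).erase ∅, ∑ i ∈ S, f i S * Pp p S := by
    rw [← Finset.sum_erase_add _ _ hmem]
    simp
  rw [h1, ← Finset.sum_erase_add _ _ hmem]
  apply add_le_add_left
  refine Finset.sum_le_sum fun S _ => ?_
  calc ∑ i ∈ S, f i S * Pp p S = (∑ i ∈ S, f i S) * Pp p S := by rw [Finset.sum_mul]
    _ ≤ 1 * Pp p S := mul_le_mul_of_nonneg_right (hbudget S) (hPp S)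
    _ = Pp p S := one_mul _
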